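/- Let G be a real p×q matrix. Then the minimum of zᵀ G v over all z ∈ {0,1}^p (vectors whose coordinates are each 0 or 1) and all unit vectors v ∈ ℝ^q equals −√( max over z ∈ {0,1}^p of zᵀ G Gᵀ z ). In particular, the joint minimization over binary codes z and unit feature vectors v reduces to the Boolean quadratic maximization max_{z∈{0,1}^p} zᵀ (G Gᵀ) z. -/

import Mathlib

open Matrix

lemma quadKey {p q : ℕ} (G : Matrix (Fin p) (Fin q) ℝ) (z : Fin p → ℝ) :
    z ⬝ᵥ (G * Gᵀ).mulVec z = (Gᵀ.mulVec z) ⬝ᵥ (Gᵀ.mulVec z) := by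
  rw [← mulVec_mulVec, dotProduct_mulVec, mulVec_transpose]

lemma linKey {p q : ℕ} (G : Matrix (Fin p) (Fin q) ℝ) (z : Fin p → ℝ) (v : Fin q → ℝ) :
    z ⬝ᵥ G.mulVec v = (Gᵀ.mulVec z) ⬝ᵥ v := by
  rw [dotProduct_mulVec, mulVec_transpose]

theorem stmt_1 (p q : ℕ) (hq : 0 < q) (G : Matrix (Fin p) (Fin q) ℝ) (m : ℝ)
    (hm : IsGreatest {r : ℝ | ∃ z : Fin p → ℝ, (∀ i, z i = 0 ∨ z i = 1) ∧
        r = z ⬝ᵥ (G * Gᵀ).mulVec z} m) :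
    IsLeast {r : ℝ | ∃ (z : Fin p → ℝ) (v : Fin q → ℝ),
        (∀ i, z i = 0 ∨ z i = 1) ∧ Real.sqrt (∑ j, v j ^ 2) = 1 ∧
        r = z ⬝ᵥ G.mulVec v} (-Real.sqrt m) := by
  obtain ⟨⟨z₀, hz₀, hmz⟩, hub⟩ := hm
  set w₀ := Gᵀ.mulVec z₀ with hw₀
  have hmw : m = ∑ j, w₀ j ^ 2 := by
    rw [hmz, quadKey]
    simp [dotProduct, sq, hw₀]
  have hm0 : 0 ≤ m := by
    rw [hmw]; positivity
  constructor
  · -- membership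
    rcases eq_or_lt_of_le hm0 with h0 | hpos
    · -- m = 0, w₀ = 0
      have hw0 : ∀ j, w₀ j = 0 := by
        intro j
        have := (Finset.sum_eq_zero_iff_of_nonneg (fun i _ => sq_nonneg (w₀ i))).mp
          (by rw [← hmw, ← h0])
        exact pow_eq_zero_iff (n := 2) (by norm_num) |>.mp (this j (Finset.mem_univ j))
      refine ⟨z₀, fun j => if j = ⟨0, hq⟩ then 1 else 0, hz₀, ?_, ?_⟩
      · rw [show (∑ j, (if j = (⟨0, hq⟩ : Fin q) then (1:ℝ) else 0) ^ 2) = 1 by simp]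
        exact Real.sqrt_one
      · rw [linKey, ← hw₀, ← h0, Real.sqrt_zero, neg_zero]
        simp [dotProduct, hw0]
    · -- m > 0
      have hs : Real.sqrt m > 0 := Real.sqrt_pos.mpr hpos
      refine ⟨z₀, fun j => -w₀ j / Real.sqrt m, hz₀, ?_, ?_⟩
      · have h1 : (∑ j, (-w₀ j / Real.sqrt m) ^ 2) = (∑ j, w₀ j ^ 2) / m := by
          rw [Finset.sum_div]
          refine Finset.sum_congr rfl fun j _ => ?_
          rw [div_pow, neg_pow, Real.sq_sqrt hm0]
          ring
        rw [h1, ← hmw, div_self hpos.ne', Real.sqrt_one]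
      · rw [linKey, ← hw₀]
        have : w₀ ⬝ᵥ (fun j => -w₀ j / Real.sqrt m) = -((∑ j, w₀ j ^ 2) / Real.sqrt m) := by
          calc (w₀ ⬝ᵥ fun j => -w₀ j / Real.sqrt m)
              = -∑ j, w₀ j ^ 2 / Real.sqrt m := by
                rw [← Finset.sum_neg_distrib]
                exact Finset.sum_congr rfl fun j _ => by simp [dotProduct]; ring
            _ = -((∑ j, w₀ j ^ 2) / Real.sqrt m) := by rw [Finset.sum_div]
        rw [this, ← hmw, Real.div_sqrt]
  · -- lower bound
    rintro r ⟨z, v, hz, hv, rfl⟩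
    set w := Gᵀ.mulVec z with hw
    have hwle : ∑ j, w j ^ 2 ≤ m := by
      have : z ⬝ᵥ (G * Gᵀ).mulVec z ∈ {r : ℝ | ∃ z : Fin p → ℝ, (∀ i, z i = 0 ∨ z i = 1) ∧
          r = z ⬝ᵥ (G * Gᵀ).mulVec z} := ⟨z, hz, rfl⟩
      have h2 := hub this
      rwa [quadKey, show (Gᵀ.mulVec z) ⬝ᵥ (Gᵀ.mulVec z) = ∑ j, w j ^ 2 by
        simp [dotProduct, hw, sq]] at h2
    have hv1 : ∑ j, v j ^ 2 = 1 := by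
      have := Real.sqrt_eq_one.mp hv
      exact this
    have hcs : (w ⬝ᵥ v) ^ 2 ≤ (∑ j, w j ^ 2) * (∑ j, v j ^ 2) := by
      simpa [dotProduct] using Finset.sum_mul_sq_le_sq_mul_sq Finset.univ w v
    have hcs' : (w ⬝ᵥ v) ^ 2 ≤ m := by
      calc (w ⬝ᵥ v) ^ 2 ≤ (∑ j, w j ^ 2) * (∑ j, v j ^ 2) := hcs
        _ = ∑ j, w j ^ 2 := by rw [hv1, mul_one]
        _ ≤ m := hwle
    have habs : |w ⬝ᵥ v| ≤ Real.sqrt m := by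
      rw [← Real.sqrt_sq_eq_abs]
      exact Real.sqrt_le_sqrt hcs'
    rw [linKey, ← hw]
    linarith [abs_le.mp habs |>.1]
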